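/- If (t, x) is an integer solution of x^4 + 2t^2x^2 - 8t^2x + t^4 = 0 with t ≥ 0, then (t, x) = (2, 2) or t ≤ 1. -/
import Mathlib

/-- If `(t, x)` is an integer solution of `x⁴ + 2t²x² - 8t²x + t⁴ = 0` with `t ≥ 0`,
then `(t, x) = (2, 2)` or `t ≤ 1`. -/
theorem dQ_integral_points (t x : ℤ) (ht : 0 ≤ t)
    (h : x ^ 4 + 2 * t ^ 2 * x ^ 2 - 8 * t ^ 2 * x + t ^ 4 = 0) :
    (t = 2 ∧ x = 2) ∨ t ≤ 1 := by
  rcases le_or_gt t 1 with h1 | h1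
  · right; exact h1
  left
  have ht2 : (2:ℤ) ≤ t := h1
  have hsq : (x^2 + t^2)^2 = 8 * t^2 * x := by nlinarith [h]
  have hx0 : 0 ≤ x := by nlinarith [sq_nonneg (x^2 + t^2)]
  have hx2 : x ≤ 2 := by nlinarith [sq_nonneg (x^2 - t^2)]
  interval_cases x
  · exfalso; nlinarith [sq_nonneg (t-2), sq_nonneg (t^2-4)]
  · exfalso
    rcases eq_or_lt_of_le ht2 with h2 | h3
    · subst h2; norm_num at h
    · have h3' : (3:ℤ) ≤ t := h3
      nlinarith [sq_nonneg (t - 3), sq_nonneg (t^2 - 9)]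
  · have h4 : t ^ 2 = 4 := by nlinarith [sq_nonneg (t^2 - 4)]
    exact ⟨by nlinarith, rfl⟩
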